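/- Let A be a finitely generated ℤ-algebra. Then a prime ideal 𝔭 of A is maximal if and only if the residue field A/𝔭 (when 𝔭 is maximal, its field of fractions in general) is a finite field; in particular every maximal ideal of A has finite residue field. -/

import Mathlib

lemma int_isJacobsonRing : IsJacobsonRing ℤ := by
  rw [isJacobsonRing_iff_prime_eq]
  intro P hP
  rcases eq_or_ne P ⊥ with rfl | hne
  · refine le_antisymm ?_ Ideal.le_jacobson
    intro x hx
    rw [Ideal.jacobson, Ideal.mem_sInf] at hx
    by_contra hx0
    rw [Ideal.mem_bot] at hx0
    obtain ⟨p, hple, hp⟩ := Nat.exists_infinite_primes (x.natAbs + 1)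
    have hM : (Ideal.span {(p : ℤ)}).IsMaximal := by
      refine PrincipalIdealRing.isMaximal_of_irreducible ?_
      exact (Int.prime_iff_natAbs_prime.mpr (by simpa using hp)).irreducible
    have hxp : x ∈ Ideal.span {(p : ℤ)} := hx ⟨bot_le, hM⟩
    rw [Ideal.mem_span_singleton] at hxp
    have : p ∣ x.natAbs := Int.natAbs_dvd_natAbs.mpr (by simpa using hxp)
    have := Nat.le_of_dvd (Int.natAbs_pos.mpr hx0) this
    omega
  · haveI : P.IsMaximal := IsPrime.to_maximal_ideal hne
    exact le_antisymm (sInf_le ⟨le_rfl, inferInstance⟩) Ideal.le_jacobson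

lemma finite_of_field_finiteType (K : Type) [Field K] [Algebra.FiniteType ℤ K] :
    Finite K := by
  haveI := int_isJacobsonRing
  haveI : Module.Finite ℤ K := finite_of_finite_type_of_isJacobsonRing ℤ K
  haveI : Algebra.IsIntegral ℤ K := Algebra.IsIntegral.of_finite ℤ K
  have hinj : ¬ Function.Injective (algebraMap ℤ K) := by
    intro hinj
    exact Int.not_isField (isField_of_isIntegral_of_isField hinj (Field.toIsField K))
  obtain ⟨a, b, hab, hne⟩ : ∃ a b : ℤ, algebraMap ℤ K a = algebraMap ℤ K b ∧ a ≠ b := by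
    simpa [Function.Injective] using hinj
  refine Module.finite_of_fg_torsion K (fun x => ?_)
  refine ⟨⟨a - b, mem_nonZeroDivisors_of_ne_zero (sub_ne_zero.mpr hne)⟩, ?_⟩
  have : ((a - b : ℤ) : K) = 0 := by
    push_cast
    rw [show ((a : K) = b) from by simpa [algebraMap_int_eq] using hab]
    ring
  show (a - b : ℤ) • x = 0
  rw [zsmul_eq_mul, this, zero_mul]

theorem maximal_iff_finite_residue (A : Type) [CommRing A] [Algebra.FiniteType ℤ A]
    (P : Ideal A) (hP : P.IsPrime) :
    (P.IsMaximal ↔ Finite (FractionRing (A ⧸ P))) ∧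
    (P.IsMaximal → Finite (A ⧸ P)) := by
  have hft : Algebra.FiniteType ℤ (A ⧸ P) :=
    Algebra.FiniteType.of_surjective (Ideal.Quotient.mkₐ ℤ P)
      Ideal.Quotient.mk_surjective
  have key : P.IsMaximal → Finite (A ⧸ P) := by
    intro hmax
    letI : Field (A ⧸ P) := Ideal.Quotient.field P
    exact @finite_of_field_finiteType (A ⧸ P) _ (by convert hft; rfl; exact Subsingleton.elim _ _)
  refine ⟨⟨fun hmax => ?_, fun hfin => ?_⟩, key⟩
  · haveI := key hmax
    letI : Field (A ⧸ P) := Ideal.Quotient.field P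
    exact Finite.of_surjective _ (IsFractionRing.surjective_iff_isField
      (K := FractionRing (A ⧸ P)).mpr (Field.toIsField (A ⧸ P)))
  · haveI : Finite (A ⧸ P) :=
      Finite.of_injective _ (IsFractionRing.injective (A ⧸ P) (FractionRing (A ⧸ P)))
    exact Ideal.Quotient.maximal_of_isField P (Finite.isField_of_domain (A ⧸ P))
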